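/- Let n be a non-negative integer, d = 2^n, and b = (b_1; b_2), c = (c_1; c_2) ∈ ℝ^{2d}. Define X(m, β, γ) = {k ∈ ℤ^{2^m} : β ≤ A_m k ≤ γ componentwise}. Then X(n+1, b, c) equals the set of vectors (k_1; k_2) ∈ ℤ^{2d} such that k_1 ∈ X(n, (b_1 + b_2)/2, (c_1 + c_2)/2) and k_2 ∈ X(n, D_n^{-1} max(b_1 − A_n k_1, −c_2 + A_n k_1), D_n^{-1} min(c_1 − A_n k_1, −b_2 + A_n k_1)), where max and min are componentwise. -/

import Mathlib

/-- σ(n,k) from the paper: σ(0,1)=1 and, with d = 2^n, σ(n+1,k)=σ(n,k) for 1 ≤ k ≤ d,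
σ(n+1,k)=2d+1−σ(n,k−d) for d+1 ≤ k ≤ 2d. -/
def sigmaCF : ℕ → ℕ → ℤ
  | 0, _ => 1
  | n + 1, k => if k ≤ 2 ^ n then sigmaCF n k else 2 * 2 ^ n + 1 - sigmaCF n (k - 2 ^ n)

/-- ξ_{n,k} = 2 cos(π(2σ(n,k) − 1)/2^{n+1}). -/
noncomputable def xiCF (n k : ℕ) : ℝ :=
  2 * Real.cos (Real.pi * (2 * (sigmaCF n k : ℝ) - 1) / 2 ^ (n + 1))

/-- D_n = diag(ξ_{n+1,1}, …, ξ_{n+1,2^n}). -/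
noncomputable def DCF (n : ℕ) : Matrix (Fin (2 ^ n)) (Fin (2 ^ n)) ℝ :=
  Matrix.diagonal fun i => xiCF (n + 1) (i.val + 1)

/-- A_0 = (1), A_{n+1} = [[A_n, D_n A_n], [A_n, −D_n A_n]]. -/
noncomputable def ACF : (n : ℕ) → Matrix (Fin (2 ^ n)) (Fin (2 ^ n)) ℝ
  | 0 => 1
  | n + 1 =>
    Matrix.reindex (finSumFinEquiv.trans (finCongr (by rw [pow_succ, mul_two])))
      (finSumFinEquiv.trans (finCongr (by rw [pow_succ, mul_two])))
      (Matrix.fromBlocks (ACF n) (DCF n * ACF n) (ACF n) (-(DCF n * ACF n)))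

/-- Vertical concatenation (x; y) of two vectors of length 2^n. -/
def vcat {α : Type*} {n : ℕ} (x y : Fin (2 ^ n) → α) : Fin (2 ^ (n + 1)) → α :=
  fun i => Fin.append x y (finCongr (by rw [pow_succ, mul_two]) i)

/-- X(m, β, γ) = {k ∈ ℤ^{2^m} : β ≤ A_m k ≤ γ componentwise}. -/
def XCF (m : ℕ) (β γ : Fin (2 ^ m) → ℝ) : Set (Fin (2 ^ m) → ℤ) :=
  {k | β ≤ (ACF m).mulVec (fun j => (k j : ℝ)) ∧ (ACF m).mulVec (fun j => (k j : ℝ)) ≤ γ}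

/-! ### Auxiliary lemmas -/

lemma sigmaCF_bounds (n : ℕ) : ∀ k, 1 ≤ k → k ≤ 2 ^ n → 1 ≤ sigmaCF n k ∧ sigmaCF n k ≤ 2 ^ n := by
  induction n with
  | zero => intro k h1 h2; simp [sigmaCF]
  | succ n ih =>
    intro k h1 h2
    have hpow : (2:ℤ) ^ (n+1) = 2 * 2 ^ n := by ring
    by_cases hk : k ≤ 2 ^ n
    · have h := ih k h1 hk
      have hle : (1:ℤ) ≤ 2 ^ n := one_le_pow₀ (by norm_num)
      simp only [sigmaCF, if_pos hk]
      exact ⟨h.1, by rw [hpow]; linarith [h.2]⟩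
    · push_neg at hk
      have h1' : 1 ≤ k - 2 ^ n := by omega
      have h2' : k - 2 ^ n ≤ 2 ^ n := by
        have : 2 ^ (n+1) = 2 ^ n + 2 ^ n := by ring
        omega
      have h := ih _ h1' h2'
      have hle : (1:ℤ) ≤ 2 ^ n := one_le_pow₀ (by norm_num)
      simp only [sigmaCF, if_neg (not_le.mpr hk)]
      exact ⟨by linarith [h.2], by rw [hpow]; linarith [h.1]⟩

lemma xiCF_pos (n : ℕ) (k : ℕ) (h1 : 1 ≤ k) (h2 : k ≤ 2 ^ n) : 0 < xiCF (n + 1) k := by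
  have hs : sigmaCF (n + 1) k = sigmaCF n k := by simp [sigmaCF, h2]
  obtain ⟨hl, hu⟩ := sigmaCF_bounds n k h1 h2
  have hl' : (1:ℝ) ≤ (sigmaCF n k : ℝ) := by exact_mod_cast hl
  have hu' : (sigmaCF n k : ℝ) ≤ 2 ^ n := by exact_mod_cast hu
  have hπ := Real.pi_pos
  unfold xiCF
  rw [hs]
  have hcos : 0 < Real.cos (Real.pi * (2 * (sigmaCF n k : ℝ) - 1) / 2 ^ (n + 1 + 1)) := by
    apply Real.cos_pos_of_mem_Ioo
    constructor
    · have : (0:ℝ) < Real.pi * (2 * (sigmaCF n k : ℝ) - 1) / 2 ^ (n + 1 + 1) := by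
        apply div_pos
        · nlinarith
        · positivity
      linarith
    · have h2e : (2:ℝ) ^ (n + 1 + 1) = 2 ^ (n + 1) * 2 := by ring
      rw [div_lt_iff₀ (by positivity), h2e]
      have hlt : 2 * (sigmaCF n k : ℝ) - 1 < 2 ^ (n + 1) := by
        have : (2:ℝ) ^ (n+1) = 2 * 2 ^ n := by ring
        nlinarith
      nlinarith [pow_pos (by norm_num : (0:ℝ) < 2) (n+1)]
  linarith

lemma DCF_diag_pos (n : ℕ) (i : Fin (2 ^ n)) : 0 < xiCF (n + 1) (i.val + 1) :=
  xiCF_pos n (i.val + 1) (by omega) (by have := i.isLt; omega)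

lemma DCF_inv (n : ℕ) :
    (DCF n)⁻¹ = Matrix.diagonal fun i => (xiCF (n + 1) (i.val + 1))⁻¹ := by
  apply Matrix.inv_eq_right_inv
  rw [DCF, Matrix.diagonal_mul_diagonal]
  have : ∀ i : Fin (2 ^ n), xiCF (n + 1) (i.val + 1) * (xiCF (n + 1) (i.val + 1))⁻¹ = 1 :=
    fun i => mul_inv_cancel₀ (DCF_diag_pos n i).ne'
  simp [this]

/-- The reindexing equivalence used in `ACF`. -/
def eCF (n : ℕ) : Fin (2 ^ n) ⊕ Fin (2 ^ n) ≃ Fin (2 ^ (n + 1)) :=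
  finSumFinEquiv.trans (finCongr (by rw [pow_succ, mul_two]))

lemma vcat_comp_eCF {α : Type*} {n : ℕ} (x y : Fin (2 ^ n) → α) :
    (vcat x y) ∘ (eCF n) = Sum.elim x y := by
  funext s
  cases s with
  | inl i => simp [eCF, vcat, Fin.append_left]
  | inr i =>
    have h : i.addNat (2 ^ n) = Fin.natAdd (2 ^ n) i := by ext; simp [Nat.add_comm]
    simp only [eCF, vcat, Function.comp_apply, Equiv.trans_apply,
      finSumFinEquiv_apply_right, finCongr_apply, Fin.cast_cast, Fin.cast_eq_self, h,
      Fin.append_right, Sum.elim_inr]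

lemma vcat_eq_elim {α : Type*} {n : ℕ} (x y : Fin (2 ^ n) → α) :
    vcat x y = Sum.elim x y ∘ (eCF n).symm := by
  funext j
  have := congrFun (vcat_comp_eCF x y) ((eCF n).symm j)
  simpa using this

lemma vcat_inl {α : Type*} {n : ℕ} (x y : Fin (2 ^ n) → α) (i : Fin (2 ^ n)) :
    vcat x y (eCF n (Sum.inl i)) = x i := by
  simpa using congrFun (vcat_comp_eCF x y) (Sum.inl i)

lemma vcat_inr {α : Type*} {n : ℕ} (x y : Fin (2 ^ n) → α) (i : Fin (2 ^ n)) :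
    vcat x y (eCF n (Sum.inr i)) = y i := by
  simpa using congrFun (vcat_comp_eCF x y) (Sum.inr i)

lemma vcat_decomp {α : Type*} {n : ℕ} (k : Fin (2 ^ (n + 1)) → α) :
    k = vcat (fun i => k (eCF n (Sum.inl i))) (fun i => k (eCF n (Sum.inr i))) := by
  funext j
  obtain ⟨s, rfl⟩ : ∃ s, eCF n s = j := ⟨(eCF n).symm j, Equiv.apply_symm_apply _ _⟩
  cases s with
  | inl i => rw [vcat_inl]
  | inr i => rw [vcat_inr]

lemma vcat_cast {n : ℕ} (k₁ k₂ : Fin (2 ^ n) → ℤ) :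
    (fun j => ((vcat k₁ k₂ j : ℤ) : ℝ)) = vcat (fun j => (k₁ j : ℝ)) (fun j => (k₂ j : ℝ)) := by
  funext j
  obtain ⟨s, rfl⟩ : ∃ s, eCF n s = j := ⟨(eCF n).symm j, Equiv.apply_symm_apply _ _⟩
  cases s with
  | inl i => rw [vcat_inl, vcat_inl]
  | inr i => rw [vcat_inr, vcat_inr]

lemma vcat_le_iff {n : ℕ} (a b p q : Fin (2 ^ n) → ℝ) :
    vcat a b ≤ vcat p q ↔ a ≤ p ∧ b ≤ q := by
  constructor
  · intro h
    constructor
    · intro i; have := h (eCF n (Sum.inl i)); rwa [vcat_inl, vcat_inl] at this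
    · intro i; have := h (eCF n (Sum.inr i)); rwa [vcat_inr, vcat_inr] at this
  · rintro ⟨h1, h2⟩ j
    obtain ⟨s, rfl⟩ : ∃ s, eCF n s = j := ⟨(eCF n).symm j, Equiv.apply_symm_apply _ _⟩
    cases s with
    | inl i => rw [vcat_inl, vcat_inl]; exact h1 i
    | inr i => rw [vcat_inr, vcat_inr]; exact h2 i

lemma ACF_succ_mulVec (n : ℕ) (x y : Fin (2 ^ n) → ℝ) :
    (ACF (n + 1)).mulVec (vcat x y) =
      vcat ((ACF n).mulVec x + (DCF n).mulVec ((ACF n).mulVec y))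
        ((ACF n).mulVec x - (DCF n).mulVec ((ACF n).mulVec y)) := by
  show (Matrix.reindex (eCF n) (eCF n)
      (Matrix.fromBlocks (ACF n) (DCF n * ACF n) (ACF n) (-(DCF n * ACF n)))).mulVec (vcat x y) = _
  rw [Matrix.reindex_apply, Matrix.submatrix_mulVec_equiv]
  rw [Equiv.symm_symm, vcat_comp_eCF, Matrix.fromBlocks_mulVec]
  simp only [Sum.elim_comp_inl, Sum.elim_comp_inr, Matrix.neg_mulVec, Matrix.mulVec_mulVec,
    Matrix.mulVec_mulVec]
  rw [vcat_eq_elim, sub_eq_add_neg]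

/-! ### Main theorem -/

/-- `X(n+1, (b₁;b₂), (c₁;c₂))` is the set of vectors `(k₁; k₂)` with
`k₁ ∈ X(n, (b₁+b₂)/2, (c₁+c₂)/2)` and
`k₂ ∈ X(n, D_n⁻¹ max(b₁ − A_n k₁, −c₂ + A_n k₁), D_n⁻¹ min(c₁ − A_n k₁, −b₂ + A_n k₁))`. -/
theorem XCF_succ (n : ℕ) (b₁ b₂ c₁ c₂ : Fin (2 ^ n) → ℝ) :
    XCF (n + 1) (vcat b₁ b₂) (vcat c₁ c₂) =
      {k | ∃ k₁ k₂ : Fin (2 ^ n) → ℤ, k = vcat k₁ k₂ ∧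
        k₁ ∈ XCF n (fun i => (b₁ i + b₂ i) / 2) (fun i => (c₁ i + c₂ i) / 2) ∧
        k₂ ∈ XCF n
          ((DCF n)⁻¹.mulVec fun i =>
            max (b₁ i - (ACF n).mulVec (fun j => (k₁ j : ℝ)) i)
              (-c₂ i + (ACF n).mulVec (fun j => (k₁ j : ℝ)) i))
          ((DCF n)⁻¹.mulVec fun i =>
            min (c₁ i - (ACF n).mulVec (fun j => (k₁ j : ℝ)) i)
              (-b₂ i + (ACF n).mulVec (fun j => (k₁ j : ℝ)) i))} := by
  ext k
  -- abbreviations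
  simp only [XCF, Set.mem_setOf_eq]
  constructor
  · rintro ⟨hb, hc⟩
    set k₁ : Fin (2 ^ n) → ℤ := fun i => k (eCF n (Sum.inl i)) with hk₁
    set k₂ : Fin (2 ^ n) → ℤ := fun i => k (eCF n (Sum.inr i)) with hk₂
    have hk : k = vcat k₁ k₂ := vcat_decomp k
    have hcast : (fun j => ((k j : ℤ) : ℝ)) =
        vcat (fun j => (k₁ j : ℝ)) (fun j => (k₂ j : ℝ)) := by
      rw [hk]; exact vcat_cast k₁ k₂
    set u := (ACF n).mulVec (fun j => (k₁ j : ℝ)) with hu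
    set v := (DCF n).mulVec ((ACF n).mulVec (fun j => (k₂ j : ℝ))) with hv
    have hm : (ACF (n + 1)).mulVec (fun j => ((k j : ℤ) : ℝ)) = vcat (u + v) (u - v) := by
      rw [hcast, ACF_succ_mulVec]
    rw [hm] at hb hc
    obtain ⟨hb1, hb2⟩ := (vcat_le_iff _ _ _ _).mp hb
    obtain ⟨hc1, hc2⟩ := (vcat_le_iff _ _ _ _).mp hc
    refine ⟨k₁, k₂, hk, ⟨?_, ?_⟩, ?_, ?_⟩
    · intro i
      have h1 := hb1 i; have h2 := hb2 i
      simp only [Pi.add_apply, Pi.sub_apply] at h1 h2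
      dsimp only
      linarith
    · intro i
      have h1 := hc1 i; have h2 := hc2 i
      simp only [Pi.add_apply, Pi.sub_apply] at h1 h2
      dsimp only
      linarith
    · intro i
      have h1 := hb1 i; have h2 := hc2 i
      simp only [Pi.add_apply, Pi.sub_apply] at h1 h2
      rw [DCF_inv, Matrix.mulVec_diagonal,
        inv_mul_le_iff₀ (DCF_diag_pos n i)]
      have hvv : v i = xiCF (n + 1) (i.val + 1) * (ACF n).mulVec (fun j => (k₂ j : ℝ)) i := by
        rw [hv, DCF, Matrix.mulVec_diagonal]
      rw [← hvv]
      exact max_le (by linarith) (by linarith)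
    · intro i
      have h1 := hc1 i; have h2 := hb2 i
      simp only [Pi.add_apply, Pi.sub_apply] at h1 h2
      rw [DCF_inv, Matrix.mulVec_diagonal,
        le_inv_mul_iff₀ (DCF_diag_pos n i)]
      have hvv : v i = xiCF (n + 1) (i.val + 1) * (ACF n).mulVec (fun j => (k₂ j : ℝ)) i := by
        rw [hv, DCF, Matrix.mulVec_diagonal]
      rw [← hvv]
      exact le_min (by linarith) (by linarith)
  · rintro ⟨k₁, k₂, rfl, ⟨-, -⟩, h2l, h2r⟩
    set u := (ACF n).mulVec (fun j => (k₁ j : ℝ)) with hu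
    set v := (DCF n).mulVec ((ACF n).mulVec (fun j => (k₂ j : ℝ))) with hv
    have hm : (ACF (n + 1)).mulVec (fun j => ((vcat k₁ k₂ j : ℤ) : ℝ)) = vcat (u + v) (u - v) := by
      rw [vcat_cast, ACF_succ_mulVec]
    rw [hm]
    have key : ∀ i, max (b₁ i - u i) (-c₂ i + u i) ≤ v i ∧
        v i ≤ min (c₁ i - u i) (-b₂ i + u i) := by
      intro i
      have hvv : v i = xiCF (n + 1) (i.val + 1) * (ACF n).mulVec (fun j => (k₂ j : ℝ)) i := by
        rw [hv, DCF, Matrix.mulVec_diagonal]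
      have hl := h2l i; have hr := h2r i
      rw [DCF_inv, Matrix.mulVec_diagonal, inv_mul_le_iff₀ (DCF_diag_pos n i), ← hvv] at hl
      rw [DCF_inv, Matrix.mulVec_diagonal, le_inv_mul_iff₀ (DCF_diag_pos n i), ← hvv] at hr
      exact ⟨hl, hr⟩
    constructor
    · rw [vcat_le_iff]
      constructor
      · intro i
        have h := key i
        simp only [max_le_iff, le_min_iff] at h
        simp only [Pi.add_apply]
        linarith [h.1.1]
      · intro i
        have h := key i
        simp only [max_le_iff, le_min_iff] at h
        simp only [Pi.sub_apply]
        linarith [h.2.2]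
    · rw [vcat_le_iff]
      constructor
      · intro i
        have h := key i
        simp only [max_le_iff, le_min_iff] at h
        simp only [Pi.add_apply]
        linarith [h.2.1]
      · intro i
        have h := key i
        simp only [max_le_iff, le_min_iff] at h
        simp only [Pi.sub_apply]
        linarith [h.1.2]
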